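/- Let 𝒢 be a groupoid and ℛ a unital ring bundle over 𝒢⁽⁰⁾. Two crossed products ℛ ×_(M,τ) 𝒢 and ℛ ×_(M',τ') 𝒢 are equivalent as 𝒢-crossed products over R = ⊕_u R_u (i.e. graded-isomorphic via a map restricting to the identity on R) if and only if there exists h ∈ C¹(𝒢,ℛ^×) with M'_x = h(x)M_x(·)h(x)⁻¹ and τ'(x,y) = h(x)M_x(h(y))τ(x,y)h(xy)⁻¹; in that case (n,x) ↦ (n·h(x), x) implements the equivalence and every equivalence is of this form. -/
import Mathlib


/-- A groupoid over a unit space `U`, with a total (junk-valued outside composables)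
multiplication. `e : U → G` is the inclusion of units. -/
structure Gpd (G U : Type) where
  s : G → U
  r : G → U
  e : U → G
  mul : G → G → G
  inv : G → G
  s_e : ∀ u, s (e u) = u
  r_e : ∀ u, r (e u) = u
  e_mul : ∀ x, mul (e (r x)) x = x
  mul_e : ∀ x, mul x (e (s x)) = x
  s_inv : ∀ x, s (inv x) = r x
  r_inv : ∀ x, r (inv x) = s x
  inv_mul : ∀ x, mul (inv x) x = e (s x)
  mul_inv : ∀ x, mul x (inv x) = e (r x)
  r_mul : ∀ x y, s x = r y → r (mul x y) = r x
  s_mul : ∀ x y, s x = r y → s (mul x y) = s y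
  assoc : ∀ x y z, s x = r y → s y = r z → mul (mul x y) z = mul x (mul y z)

/-- Transport along an equality of base points of a bundle of types. -/
def tr {U : Type} (Rf : U → Type) {u v : U} (h : u = v) (a : Rf u) : Rf v := h ▸ a

/-- A factor system `(M,τ)` for `(𝒢,ℛ)`, where `ℛ` is the unital ring bundle with fibers
`Rf u`: `M_x : R_{s x} → R_{r x}` are ring isomorphisms which are trivial on units, and
`τ(x,y) ∈ R_{r x}ˣ` is normalized and satisfies the conditions (C1) and (C2). -/
structure RingFS {G U : Type} (𝒢 : Gpd G U) (Rf : U → Type) [∀ u, Ring (Rf u)] where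
  M : (x : G) → Rf (𝒢.s x) → Rf (𝒢.r x)
  τ : (x y : G) → Rf (𝒢.r x)
  τinv : (x y : G) → Rf (𝒢.r x)
  M_add : ∀ x a b, M x (a + b) = M x a + M x b
  M_mul : ∀ x a b, M x (a * b) = M x a * M x b
  M_one : ∀ x, M x 1 = 1
  M_bij : ∀ x, Function.Bijective (M x)
  M_e : ∀ u a, M (𝒢.e u) a = tr Rf ((𝒢.s_e u).trans (𝒢.r_e u).symm) a
  τ_mul_τinv : ∀ x y, 𝒢.s x = 𝒢.r y → τ x y * τinv x y = 1
  τinv_mul_τ : ∀ x y, 𝒢.s x = 𝒢.r y → τinv x y * τ x y = 1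
  τ_e_left : ∀ x, τ (𝒢.e (𝒢.r x)) x = 1
  τ_e_right : ∀ x, τ x (𝒢.e (𝒢.s x)) = 1
  C1 : ∀ x y (h : 𝒢.s x = 𝒢.r y) (n : Rf (𝒢.s y)),
    M x (tr Rf h.symm (M y n)) =
      τ x y * tr Rf (𝒢.r_mul x y h) (M (𝒢.mul x y) (tr Rf (𝒢.s_mul x y h).symm n)) * τinv x y
  C2 : ∀ x y z (hxy : 𝒢.s x = 𝒢.r y) (hyz : 𝒢.s y = 𝒢.r z),
    τ x y * tr Rf (𝒢.r_mul x y hxy) (τ (𝒢.mul x y) z) =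
      M x (tr Rf hxy.symm (τ y z)) * τ x (𝒢.mul y z)

/-- An equivalence of the `𝒢`-crossed products `ℛ ×_(M',τ') 𝒢 → ℛ ×_(M,τ) 𝒢` over
`R = ⊕_u R_u`, described on homogeneous components: a family of additive bijections
`φ_x : R_{r x} → R_{r x}` which is the identity in degrees `u ∈ 𝒢⁽⁰⁾` (i.e. restricts to the
identity on `R`) and intertwines the products of homogeneous elements. -/
def IsCPEquiv {G U : Type} (𝒢 : Gpd G U) (Rf : U → Type) [∀ u, Ring (Rf u)]
    (F F' : RingFS 𝒢 Rf) (φ : (x : G) → Rf (𝒢.r x) → Rf (𝒢.r x)) : Prop :=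
  (∀ x, Function.Bijective (φ x)) ∧
  (∀ x a b, φ x (a + b) = φ x a + φ x b) ∧
  (∀ u a, φ (𝒢.e u) a = a) ∧
  (∀ x y (h : 𝒢.s x = 𝒢.r y) (a : Rf (𝒢.r x)) (b : Rf (𝒢.r y)),
    φ (𝒢.mul x y)
        (tr Rf (𝒢.r_mul x y h).symm (a * F'.M x (tr Rf h.symm b) * F'.τ x y)) =
      tr Rf (𝒢.r_mul x y h).symm (φ x a * F.M x (tr Rf h.symm (φ y b)) * F.τ x y))


section Helpers

variable {U : Type} {Rf : U → Type} [∀ u, Ring (Rf u)]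

set_option linter.unusedSectionVars false

theorem tr_self {u : U} (p : u = u) (a : Rf u) : tr Rf p a = a := rfl

theorem tr_tr {u v w : U} (p : u = v) (q : v = w) (a : Rf u) :
    tr Rf q (tr Rf p a) = tr Rf (p.trans q) a := by subst p; subst q; rfl

theorem tr_mul {u v : U} (p q : u = v) (a b : Rf u) :
    tr Rf p a * tr Rf q b = tr Rf p (a * b) := by subst p; rfl

theorem tr_mul' {u v : U} (p : u = v) (a b : Rf u) :
    tr Rf p (a * b) = tr Rf p a * tr Rf p b := by subst p; rfl

theorem tr_one {u v : U} (p : u = v) : tr Rf p (1 : Rf u) = 1 := by subst p; rfl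

theorem phi_congr {G : Type} (𝒢 : Gpd G U)
    (φ : (x : G) → Rf (𝒢.r x) → Rf (𝒢.r x)) {x y : G} (hxy : x = y)
    (p : 𝒢.r x = 𝒢.r y) (a : Rf (𝒢.r x)) :
    tr Rf p (φ x a) = φ y (tr Rf p a) := by subst hxy; rfl

theorem inv_cancel {R : Type} [Ring R] {a b : R} (h : a * b = 1) (z : R) :
    a * (b * z) = z := by rw [← mul_assoc, h, one_mul]

end Helpers

theorem key19 {G U : Type} (𝒢 : Gpd G U) (Rf : U → Type) [∀ u, Ring (Rf u)]
    (F F' : RingFS 𝒢 Rf) (φ : (x : G) → Rf (𝒢.r x) → Rf (𝒢.r x))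
    (hφ : IsCPEquiv 𝒢 Rf F F' φ) :
    ∃ h hinv : (x : G) → Rf (𝒢.r x),
        (∀ x, h x * hinv x = 1) ∧ (∀ x, hinv x * h x = 1) ∧
        (∀ u, h (𝒢.e u) = 1) ∧
        (∀ x n, F'.M x n = h x * F.M x n * hinv x) ∧
        (∀ x y (hc : 𝒢.s x = 𝒢.r y),
          F'.τ x y = h x * F.M x (tr Rf hc.symm (h y)) * F.τ x y *
            tr Rf (𝒢.r_mul x y hc) (hinv (𝒢.mul x y))) ∧
        (∀ x a, φ x a = a * h x) := by
  obtain ⟨hbij, hadd, hid, hmul⟩ := hφ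
  -- Step A: φ is a left module map
  have stepA : ∀ x (a b : Rf (𝒢.r x)), φ x (a * b) = a * φ x b := by
    intro x a b
    have H := hmul (𝒢.e (𝒢.r x)) x (𝒢.s_e (𝒢.r x)) (tr Rf (𝒢.r_e (𝒢.r x)).symm a) b
    have H2 := congrArg (tr Rf (congrArg 𝒢.r (𝒢.e_mul x))) H
    rw [phi_congr 𝒢 φ (𝒢.e_mul x)] at H2
    simp only [F.M_e, F'.M_e, F.τ_e_left, F'.τ_e_left, hid, mul_one, tr_mul, tr_tr,
      tr_self] at H2
    exact H2
  -- Step C: right-unit instantiation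
  have stepC : ∀ x (a : Rf (𝒢.r x)) (b : Rf (𝒢.s x)),
      φ x (a * F'.M x b) = φ x a * F.M x b := by
    intro x a b
    have H := hmul x (𝒢.e (𝒢.s x)) (𝒢.r_e (𝒢.s x)).symm a (tr Rf (𝒢.r_e (𝒢.s x)).symm b)
    have H2 := congrArg (tr Rf (𝒢.r_mul x (𝒢.e (𝒢.s x)) (𝒢.r_e (𝒢.s x)).symm)) H
    rw [phi_congr 𝒢 φ (𝒢.mul_e x)] at H2
    simp only [F.τ_e_right, F'.τ_e_right, hid, mul_one, tr_tr, tr_self] at H2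
    exact H2
  -- Step B: φ is right translation by h x := φ x 1
  have stepB : ∀ x (a : Rf (𝒢.r x)), φ x a = a * φ x 1 := by
    intro x a
    have := stepA x a 1
    rwa [mul_one] at this
  -- two-sided inverses
  have hinvex : ∀ x, ∃ g : Rf (𝒢.r x), (φ x 1 * g = 1) ∧ (g * φ x 1 = 1) := by
    intro x
    obtain ⟨g, hg⟩ := (hbij x).2 1
    have hgl : g * φ x 1 = 1 := by rw [← stepB x g]; exact hg
    refine ⟨g, ?_, hgl⟩
    apply (hbij x).1
    have : φ x (φ x 1 * g) = φ x 1 := by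
      rw [stepB x (φ x 1 * g), mul_assoc, hgl, mul_one]
    exact this
  choose hinv hinv_r hinv_l using hinvex
  have hM : ∀ x n, F'.M x n = φ x 1 * F.M x n * hinv x := by
    intro x n
    have H := stepC x 1 n
    rw [one_mul, stepB x (F'.M x n)] at H
    calc F'.M x n = F'.M x n * (φ x 1 * hinv x) := by rw [hinv_r, mul_one]
      _ = F'.M x n * φ x 1 * hinv x := by rw [mul_assoc]
      _ = φ x 1 * F.M x n * hinv x := by rw [H]
  have hτ : ∀ x y (hc : 𝒢.s x = 𝒢.r y),
      F'.τ x y = φ x 1 * F.M x (tr Rf hc.symm (φ y 1)) * F.τ x y *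
        tr Rf (𝒢.r_mul x y hc) (hinv (𝒢.mul x y)) := by
    intro x y hc
    have H := hmul x y hc 1 1
    simp only [tr_one, F'.M_one, one_mul, mul_one] at H
    rw [stepB (𝒢.mul x y)] at H
    have H2 : tr Rf (𝒢.r_mul x y hc).symm (F'.τ x y) =
        tr Rf (𝒢.r_mul x y hc).symm (φ x 1 * F.M x (tr Rf hc.symm (φ y 1)) * F.τ x y) *
          hinv (𝒢.mul x y) := by
      calc tr Rf (𝒢.r_mul x y hc).symm (F'.τ x y)
          = tr Rf (𝒢.r_mul x y hc).symm (F'.τ x y) *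
              (φ (𝒢.mul x y) 1 * hinv (𝒢.mul x y)) := by rw [hinv_r, mul_one]
        _ = tr Rf (𝒢.r_mul x y hc).symm (F'.τ x y) * φ (𝒢.mul x y) 1 *
              hinv (𝒢.mul x y) := by rw [mul_assoc]
        _ = _ := by rw [H]
    have H3 := congrArg (tr Rf (𝒢.r_mul x y hc)) H2
    simp only [tr_mul', tr_tr, tr_self] at H3
    exact H3
  exact ⟨fun x => φ x 1, hinv, hinv_r, hinv_l, fun u => hid u 1, hM, hτ, stepB⟩

/-- Two `𝒢`-crossed products `ℛ ×_(M,τ) 𝒢` and `ℛ ×_(M',τ') 𝒢` over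
`R = ⊕_u R_u` are equivalent iff there is `h ∈ C¹(𝒢,ℛ^×)` with
`M'_x = h(x) M_x(·) h(x)⁻¹` and `τ'(x,y) = h(x) M_x(h(y)) τ(x,y) h(xy)⁻¹`; in that case
`a ↦ a·h(x)` implements the equivalence and every equivalence is of this form. -/
theorem stmt19 {G U : Type} (𝒢 : Gpd G U) (Rf : U → Type) [∀ u, Ring (Rf u)]
    (F F' : RingFS 𝒢 Rf) :
    ((∃ φ, IsCPEquiv 𝒢 Rf F F' φ) ↔
      ∃ h hinv : (x : G) → Rf (𝒢.r x),
        (∀ x, h x * hinv x = 1) ∧ (∀ x, hinv x * h x = 1) ∧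
        (∀ u, h (𝒢.e u) = 1) ∧
        (∀ x n, F'.M x n = h x * F.M x n * hinv x) ∧
        (∀ x y (hc : 𝒢.s x = 𝒢.r y),
          F'.τ x y = h x * F.M x (tr Rf hc.symm (h y)) * F.τ x y *
            tr Rf (𝒢.r_mul x y hc) (hinv (𝒢.mul x y)))) ∧
    (∀ φ, IsCPEquiv 𝒢 Rf F F' φ →
      ∃ h hinv : (x : G) → Rf (𝒢.r x),
        (∀ x, h x * hinv x = 1) ∧ (∀ x, hinv x * h x = 1) ∧
        (∀ u, h (𝒢.e u) = 1) ∧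
        (∀ x n, F'.M x n = h x * F.M x n * hinv x) ∧
        (∀ x y (hc : 𝒢.s x = 𝒢.r y),
          F'.τ x y = h x * F.M x (tr Rf hc.symm (h y)) * F.τ x y *
            tr Rf (𝒢.r_mul x y hc) (hinv (𝒢.mul x y))) ∧
        (∀ x a, φ x a = a * h x)) := by
  constructor
  · constructor
    · rintro ⟨φ, hφ⟩
      obtain ⟨h, hinv, p1, p2, p3, p4, p5, _⟩ := key19 𝒢 Rf F F' φ hφ
      exact ⟨h, hinv, p1, p2, p3, p4, p5⟩
    · rintro ⟨h, hinv, p1, p2, p3, p4, p5⟩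
      refine ⟨fun x a => a * h x, ?_, ?_, ?_, ?_⟩
      · intro x
        constructor
        · intro a b hab
          have hab' : a * h x = b * h x := hab
          have := congrArg (· * hinv x) hab'
          simpa [mul_assoc, p1, mul_one] using this
        · intro c
          exact ⟨c * hinv x, show c * hinv x * h x = c by rw [mul_assoc, p2, mul_one]⟩
      · intro x a b; exact add_mul a b (h x)
      · intro u a; show a * h (𝒢.e u) = a; rw [p3, mul_one]
      · intro x y hc a b
        show tr Rf (𝒢.r_mul x y hc).symm (a * F'.M x (tr Rf hc.symm b) * F'.τ x y) *
            h (𝒢.mul x y) =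
          tr Rf (𝒢.r_mul x y hc).symm
            ((a * h x) * F.M x (tr Rf hc.symm (b * h y)) * F.τ x y)
        conv_lhs => rw [show h (𝒢.mul x y) =
          tr Rf (𝒢.r_mul x y hc).symm (tr Rf (𝒢.r_mul x y hc) (h (𝒢.mul x y))) by
            rw [tr_tr, tr_self]]
        rw [tr_mul]
        congr 1
        rw [p4, p5 x y hc, tr_mul' hc.symm b (h y), F.M_mul]
        simp only [mul_assoc]
        rw [tr_mul, p2, tr_one, mul_one, inv_cancel (p2 x)]
  · exact fun φ hφ => key19 𝒢 Rf F F' φ hφ
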